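/- Let V be a finite type, G a simple graph on V with maximum degree at most d, and L an even natural number with L ≥ 2. Suppose that for each vertex v we are given an injective map σ_v from the incidence set of v (the edges of G containing v) to ZMod (deg v), where deg v is the degree of v (this encodes a cyclic order of the edges around each vertex). Then there exists a coloring C of the edges of G with at most min(d, 2L) + 1 colors such that: for every vertex v and every pair of distinct edges e, f incident to v, if the cyclic distance between σ_v e and σ_v f in ZMod (deg v) — that is, min((σ_v e − σ_v f).val, (σ_v f − σ_v e).val) — is at most L/2, then C e ≠ C f. -/

import Mathlib

set_option linter.unusedSectionVars false
set_option linter.unusedVariables false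
open Finset

namespace VizingProof

variable {V : Type*} [Fintype V] [DecidableEq V] {G : SimpleGraph V} [DecidableRel G.Adj] {d : ℕ}

def Good (G : SimpleGraph V) (d : ℕ) (c : Sym2 V → Option ℕ) : Prop :=
  (∀ e, (c e).isSome → e ∈ G.edgeSet) ∧
  (∀ e k, c e = some k → k ≤ d) ∧
  (∀ e f v, e ≠ f → v ∈ e → v ∈ f → (c e).isSome → c e ≠ c f)

def Free (c : Sym2 V → Option ℕ) (v : V) (k : ℕ) : Prop := ∀ e, v ∈ e → c e ≠ some k

/-- every vertex has a free color among 0..d -/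
lemma exists_free {c : Sym2 V → Option ℕ} (hc : Good G d c) (hd : ∀ v, G.degree v ≤ d)
    (v : V) : ∃ k ≤ d, Free c v k := by
  by_contra h
  push_neg at h
  have h' : ∀ k ∈ Finset.range (d+1), some k ∈ (G.incidenceFinset v).image (fun e => c e) := by
    intro k hk
    rw [Finset.mem_range] at hk
    obtain ⟨e, hve, hce⟩ := by
      have := h k (by omega)
      simpa [Free] using this
    refine Finset.mem_image.mpr ⟨e, ?_, hce⟩
    rw [SimpleGraph.mem_incidenceFinset]
    exact ⟨hc.1 e (by simp [hce]), hve⟩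
  have hsub : (Finset.range (d+1)).image (fun k => (some k : Option ℕ)) ⊆
      (G.incidenceFinset v).image (fun e => c e) := by
    intro x hx
    obtain ⟨k, hk, rfl⟩ := Finset.mem_image.mp hx
    exact h' k hk
  have h1 := Finset.card_le_card hsub
  rw [Finset.card_image_of_injective _ (Option.some_injective ℕ), Finset.card_range] at h1
  have h2 := Finset.card_image_le (s := G.incidenceFinset v) (f := fun e => c e)
  have h3 := G.card_incidenceFinset_eq_degree v
  have h4 := hd v
  omega



variable {V : Type*} [Fintype V] [DecidableEq V] {G : SimpleGraph V} [DecidableRel G.Adj] {d : ℕ}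

/-- the a/b subgraph -/
def abGraph (c : Sym2 V → Option ℕ) (a b : ℕ) : SimpleGraph V where
  Adj u w := u ≠ w ∧ (c s(u,w) = some a ∨ c s(u,w) = some b)
  symm := by
    constructor
    intro u w ⟨h1, h2⟩
    exact ⟨h1.symm, by rwa [Sym2.eq_swap]⟩
  loopless := by constructor; intro u ⟨h1, _⟩; exact h1 rfl

instance abGraphDecidable (c : Sym2 V → Option ℕ) (a b : ℕ) :
    DecidableRel (abGraph c a b).Adj :=
  fun u w => inferInstanceAs (Decidable (u ≠ w ∧ (c s(u,w) = some a ∨ c s(u,w) = some b)))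

/-- color swap function -/
def τ (a b : ℕ) : Option ℕ → Option ℕ := fun k =>
  if k = some a then some b else if k = some b then some a else k

lemma τ_τ (a b : ℕ) (k : Option ℕ) : τ a b (τ a b k) = k := by
  unfold τ; split_ifs <;> simp_all

lemma τ_inj (a b : ℕ) : Function.Injective (τ a b) :=
  Function.LeftInverse.injective (g := τ a b) (τ_τ a b)

lemma τ_isSome (a b : ℕ) (k : Option ℕ) : ((τ a b) k).isSome = k.isSome := by
  unfold τ; split_ifs <;> simp_all

lemma τ_eq_self {a b : ℕ} {k : Option ℕ} (ha : k ≠ some a) (hb : k ≠ some b) :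
    τ a b k = k := by unfold τ; split_ifs <;> simp_all

open scoped Classical in
/-- swapped coloring: swap a/b on the component of x₀ in the ab-graph -/
noncomputable def swapC (c : Sym2 V → Option ℕ) (a b : ℕ) (x₀ : V) : Sym2 V → Option ℕ :=
  fun e => if ∃ v ∈ e, (abGraph c a b).Reachable x₀ v then τ a b (c e) else c e

variable {c : Sym2 V → Option ℕ} {a b : ℕ} {x₀ : V}

lemma swapC_pos {e : Sym2 V} (h : ∃ v ∈ e, (abGraph c a b).Reachable x₀ v) :
    swapC c a b x₀ e = τ a b (c e) := by
  unfold swapC; rw [if_pos h]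

lemma swapC_neg {e : Sym2 V} (h : ¬ ∃ v ∈ e, (abGraph c a b).Reachable x₀ v) :
    swapC c a b x₀ e = c e := by
  unfold swapC; rw [if_neg h]

lemma swapC_cases (e : Sym2 V) : swapC c a b x₀ e = τ a b (c e) ∨ swapC c a b x₀ e = c e := by
  unfold swapC; split_ifs <;> simp

lemma swapC_isSome (e : Sym2 V) : ((swapC c a b x₀) e).isSome = (c e).isSome := by
  unfold swapC; split_ifs <;> simp [τ_isSome]

/-- if e is an ab-edge and one endpoint is reachable, so are all its members -/
lemma reach_all_of_mem {e : Sym2 V} (hab : c e = some a ∨ c e = some b)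
    (h : ∃ v ∈ e, (abGraph c a b).Reachable x₀ v) {w : V} (hw : w ∈ e) :
    (abGraph c a b).Reachable x₀ w := by
  obtain ⟨v, hv, hr⟩ := h
  by_cases hvw : v = w
  · subst hvw; exact hr
  · refine hr.trans (SimpleGraph.Adj.reachable ?_)
    refine ⟨hvw, ?_⟩
    have he : e = s(v, w) := by
      induction e with
      | _ u u' =>
        rcases Sym2.mem_iff.mp hv with rfl | rfl <;> rcases Sym2.mem_iff.mp hw with rfl | rfl
        · exact absurd rfl hvw
        · rfl
        · exact Sym2.eq_swap
        · exact absurd rfl hvw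
    rwa [he] at hab

/-- edges at an unreachable vertex are unchanged -/
lemma swapC_eq_of_not_reach {v : V} (hv : ¬ (abGraph c a b).Reachable x₀ v)
    {e : Sym2 V} (he : v ∈ e) : swapC c a b x₀ e = c e := by
  unfold swapC
  split_ifs with h
  · by_cases hab : c e = some a ∨ c e = some b
    · exact absurd (reach_all_of_mem hab h he) hv
    · push_neg at hab; exact τ_eq_self hab.1 hab.2
  · rfl

lemma goodSwap (hc : Good G d c) (ha : a ≤ d) (hb : b ≤ d) : Good G d (swapC c a b x₀) := by
  obtain ⟨hsup, hbd, hprop⟩ := hc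
  refine ⟨?_, ?_, ?_⟩
  · intro e h; rw [swapC_isSome] at h; exact hsup e h
  · intro e k h
    unfold swapC at h
    split_ifs at h with hcond
    · unfold τ at h
      split_ifs at h with h1 h2
      · cases h; exact hb
      · cases h; exact ha
      · exact hbd _ _ h
    · exact hbd _ _ h
  · intro e f v hef hve hvf hsome heq
    have hsome' : (c e).isSome := by rwa [swapC_isSome] at hsome
    by_cases hRe : ∃ u ∈ e, (abGraph c a b).Reachable x₀ u
    · -- e swapped
      by_cases hRf : ∃ u ∈ f, (abGraph c a b).Reachable x₀ u
      · unfold swapC at heq; rw [if_pos hRe, if_pos hRf] at heq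
        exact hprop e f v hef hve hvf hsome' (τ_inj a b heq)
      · -- e reachable, f not : v ∈ e so if e is ab-edge, v reachable, then f reachable. contra
        by_cases hab : c e = some a ∨ c e = some b
        · have := reach_all_of_mem hab hRe hve
          exact hRf ⟨v, hvf, this⟩
        · push_neg at hab
          unfold swapC at heq; rw [if_pos hRe, if_neg hRf] at heq
          rw [τ_eq_self hab.1 hab.2] at heq
          exact hprop e f v hef hve hvf hsome' heq
    · by_cases hRf : ∃ u ∈ f, (abGraph c a b).Reachable x₀ u
      · by_cases hab : c f = some a ∨ c f = some b
        · have := reach_all_of_mem hab hRf hvf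
          exact hRe ⟨v, hve, this⟩
        · push_neg at hab
          unfold swapC at heq; rw [if_neg hRe, if_pos hRf] at heq
          rw [τ_eq_self hab.1 hab.2] at heq
          exact hprop e f v hef hve hvf hsome' heq
      · unfold swapC at heq; rw [if_neg hRe, if_neg hRf] at heq
        exact hprop e f v hef hve hvf hsome' heq

/-- freeness of non-ab colors is preserved -/
lemma free_swap_of_ne {v : V} {k : ℕ} (hka : k ≠ a) (hkb : k ≠ b)
    (h : Free c v k) : Free (swapC c a b x₀) v k := by
  intro e hve heq
  rcases swapC_cases (c := c) (a := a) (b := b) (x₀ := x₀) e with hs | hs <;> rw [hs] at heq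
  · unfold τ at heq
    split_ifs at heq with h1 h2
    · cases heq; exact hkb rfl
    · cases heq; exact hka rfl
    · exact h e hve heq
  · exact h e hve heq

lemma free_swap_of_not_reach {v : V} {k : ℕ} (hv : ¬ (abGraph c a b).Reachable x₀ v)
    (h : Free c v k) : Free (swapC c a b x₀) v k := by
  intro e hve heq
  rw [swapC_eq_of_not_reach hv hve] at heq
  exact h e hve heq

/-- at a reachable vertex, freeness of b becomes freeness of a -/
lemma free_swap_reach {v : V} (hv : (abGraph c a b).Reachable x₀ v)
    (h : Free c v b) : Free (swapC c a b x₀) v a := by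
  intro e hve heq
  by_cases hcond : ∃ u ∈ e, (abGraph c a b).Reachable x₀ u
  · rw [swapC_pos hcond] at heq
    unfold τ at heq
    split_ifs at heq with h1 h2
    · cases heq
      exact h e hve (by rw [h1])
    · exact h e hve h2
    · exact h1 heq
  · rw [swapC_neg hcond] at heq
    exact hcond ⟨v, hve, hv⟩



variable {V : Type*} [Fintype V] [DecidableEq V] {G : SimpleGraph V} [DecidableRel G.Adj] {d : ℕ}

def IsFan (G : SimpleGraph V) (c : Sym2 V → Option ℕ) (x : V) (l : List V) : Prop :=
  l.Nodup ∧ x ∉ l ∧ (∀ y ∈ l, G.Adj x y) ∧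
  List.IsChain (fun z w => ∃ k, c s(x,w) = some k ∧ Free c z k) l

lemma chain'_imp_mem {α : Type*} {R S : α → α → Prop} :
    ∀ (l : List α) (a : α), List.IsChain R (a :: l) →
      (∀ p ∈ a :: l, ∀ q ∈ l, R p q → S p q) → List.IsChain S (a :: l) := by
  intro l
  induction l with
  | nil => intro a _ _; simp [List.isChain_singleton]
  | cons b t ih =>
    intro a h himp
    rw [List.isChain_cons_cons] at h ⊢
    refine ⟨himp a (by simp) b (by simp) h.1, ?_⟩
    exact ih b h.2 (fun p hp q hq hr => himp p (List.mem_cons_of_mem a hp) q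
      (List.mem_cons_of_mem b hq) hr)

lemma goodErase {c : Sym2 V → Option ℕ} (hc : Good G d c) (e₀ : Sym2 V) :
    Good G d (Function.update c e₀ none) := by
  obtain ⟨hsup, hbd, hprop⟩ := hc
  refine ⟨?_, ?_, ?_⟩
  · intro e h
    rcases eq_or_ne e e₀ with rfl | hne
    · simp at h
    · rw [Function.update_of_ne hne] at h; exact hsup e h
  · intro e k h
    rcases eq_or_ne e e₀ with rfl | hne
    · simp at h
    · rw [Function.update_of_ne hne] at h; exact hbd e k h
  · intro e f v hef hve hvf hsome
    rcases eq_or_ne e e₀ with rfl | hne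
    · simp at hsome
    · rw [Function.update_of_ne hne] at hsome ⊢
      rcases eq_or_ne f e₀ with rfl | hnf
      · simp only [Function.update_self]
        intro h; rw [h] at hsome; simp at hsome
      · rw [Function.update_of_ne hnf]
        exact hprop e f v hef hve hvf hsome

lemma goodUpdate {c : Sym2 V → Option ℕ} (hc : Good G d c) {x y : V} (hxy : G.Adj x y)
    {k : ℕ} (hk : k ≤ d) (hfx : Free c x k) (hfy : Free c y k) :
    Good G d (Function.update c s(x,y) (some k)) := by
  obtain ⟨hsup, hbd, hprop⟩ := hc
  refine ⟨?_, ?_, ?_⟩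
  · intro e h
    rcases eq_or_ne e s(x,y) with rfl | hne
    · exact hxy
    · rw [Function.update_of_ne hne] at h; exact hsup e h
  · intro e j h
    rcases eq_or_ne e s(x,y) with rfl | hne
    · rw [Function.update_self] at h; cases h; exact hk
    · rw [Function.update_of_ne hne] at h; exact hbd e j h
  · intro e f v hef hve hvf hsome heq
    rcases eq_or_ne e s(x,y) with rfl | hne
    · rw [Function.update_self] at heq
      have hnf : f ≠ s(x,y) := fun h => hef h.symm
      rw [Function.update_of_ne hnf] at heq
      rcases Sym2.mem_iff.mp hve with rfl | rfl
      · exact hfx f hvf heq.symm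
      · exact hfy f hvf heq.symm
    · rw [Function.update_of_ne hne] at hsome heq
      rcases eq_or_ne f s(x,y) with rfl | hnf
      · rw [Function.update_self] at heq
        rcases Sym2.mem_iff.mp hvf with rfl | rfl
        · exact hfx e hve heq
        · exact hfy e hve heq
      · rw [Function.update_of_ne hnf] at heq
        exact hprop e f v hef hve hvf hsome heq

/-- the fan rotation lemma -/
lemma rotate (x : V) : ∀ (ys : List V) (y₀ : V) (c : Sym2 V → Option ℕ), Good G d c →
    IsFan G c x (y₀ :: ys) → c s(x, y₀) = none →
    ∃ c', Good G d c' ∧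
      c' s(x, (y₀ :: ys).getLast (by simp)) = none ∧
      (∀ k, Free c x k → Free c' x k) ∧
      (∀ k, Free c ((y₀ :: ys).getLast (by simp)) k →
        Free c' ((y₀ :: ys).getLast (by simp)) k) ∧
      (∀ e, ((c e).isSome ∨ e = s(x, y₀)) →
        ((c' e).isSome ∨ e = s(x, (y₀ :: ys).getLast (by simp)))) := by
  intro ys
  induction ys with
  | nil =>
    intro y₀ c hc hfan hnone
    exact ⟨c, hc, by simpa using hnone, fun k h => h, fun k h => h, fun e h => by simpa using h⟩
  | cons y₁ ys' ih =>
    intro y₀ c hc hfan hnone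
    obtain ⟨hnd, hxl, hadj, hchain⟩ := hfan
    -- head relation
    rw [List.isChain_cons_cons] at hchain
    obtain ⟨⟨b₁, hb₁, hfree₁⟩, hchain'⟩ := hchain
    have hxy₀ : x ≠ y₀ := fun h => hxl (h ▸ List.mem_cons_self)
    have hxy₁ : x ≠ y₁ := fun h => hxl (by rw [← h] at *; simp)
    have hy₀y₁ : y₀ ≠ y₁ := by
      intro h; rw [List.nodup_cons] at hnd; exact hnd.1 (h ▸ List.mem_cons_self)
    have hedne : s(x, y₀) ≠ s(x, y₁) := fun h => hy₀y₁ (Sym2.congr_right.mp h)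
    -- step coloring
    set c₁ : Sym2 V → Option ℕ :=
      Function.update (Function.update c s(x,y₁) none) s(x,y₀) (some b₁) with hc₁def
    have hGe : Good G d (Function.update c s(x,y₁) none) := goodErase hc _
    have hb₁d : b₁ ≤ d := hc.2.1 _ _ hb₁
    have hfreex : Free (Function.update c s(x,y₁) none) x b₁ := by
      intro e hxe heq
      rcases eq_or_ne e s(x,y₁) with rfl | hne
      · simp at heq
      · rw [Function.update_of_ne hne] at heq
        exact (hc.2.2 e s(x,y₁) x hne hxe (by simp) (by simp [heq]))
          (by rw [heq, hb₁])
    have hfreey₀ : Free (Function.update c s(x,y₁) none) y₀ b₁ := by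
      intro e hye heq
      rcases eq_or_ne e s(x,y₁) with rfl | hne
      · simp at heq
      · rw [Function.update_of_ne hne] at heq
        exact hfree₁ e hye heq
    have hc₁ : Good G d c₁ := goodUpdate hGe (hadj y₀ (by simp)) hb₁d hfreex hfreey₀
    -- transfer of freeness through the step
    have hstep_free : ∀ z k, z ≠ y₀ → Free c z k → Free c₁ z k := by
      intro z k hzy₀ hzfree e hze heq
      rw [hc₁def] at heq
      rcases eq_or_ne e s(x,y₀) with rfl | hne
      · rw [Function.update_self] at heq
        cases heq
        rcases Sym2.mem_iff.mp hze with h | h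
        · exact hzfree _ (by simp [h]) hb₁
        · exact hzy₀ h
      · rw [Function.update_of_ne hne] at heq
        rcases eq_or_ne e s(x,y₁) with rfl | hne'
        · simp at heq
        · rw [Function.update_of_ne hne'] at heq
          exact hzfree e hze heq
    -- values on edges other than the two updated ones are unchanged
    have hc₁eq : ∀ e, e ≠ s(x,y₀) → e ≠ s(x,y₁) → c₁ e = c e := by
      intro e h1 h2
      rw [hc₁def, Function.update_of_ne h1, Function.update_of_ne h2]
    have hc₁y₁ : c₁ s(x, y₁) = none := by
      rw [hc₁def, Function.update_of_ne (Ne.symm hedne), Function.update_self]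
    -- tail fan
    have hndtail : (y₁ :: ys').Nodup := (List.nodup_cons.mp hnd).2
    have hfan' : IsFan G c₁ x (y₁ :: ys') := by
      refine ⟨hndtail, fun h => hxl (List.mem_cons_of_mem _ h), 
        fun y hy => hadj y (List.mem_cons_of_mem _ hy), ?_⟩
      refine chain'_imp_mem _ _ hchain' ?_
      rintro p hp q hq ⟨k, hk, hkfree⟩
      have hqy₀ : q ≠ y₀ := by
        intro h; rw [List.nodup_cons] at hnd
        exact hnd.1 (h ▸ List.mem_cons_of_mem _ hq)
      have hqy₁ : q ≠ y₁ := by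
        intro h; rw [List.nodup_cons] at hndtail
        exact hndtail.1 (h ▸ hq)
      have hpy₀ : p ≠ y₀ := by
        intro h; rw [List.nodup_cons] at hnd
        exact hnd.1 (h ▸ hp)
      refine ⟨k, ?_, hstep_free p k hpy₀ hkfree⟩
      rw [hc₁eq _ (fun h => hqy₀ (Sym2.congr_right.mp h))
        (fun h => hqy₁ (Sym2.congr_right.mp h))]
      exact hk
    obtain ⟨c', hc', hlast, hfx, hflast, hsome⟩ := ih y₁ c₁ hc₁ hfan' hc₁y₁
    have hgl : (y₀ :: y₁ :: ys').getLast (by simp) = (y₁ :: ys').getLast (by simp) :=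
      List.getLast_cons (by simp)
    have hlastmem : (y₁ :: ys').getLast (by simp) ∈ y₁ :: ys' := List.getLast_mem _
    have hlastney₀ : (y₁ :: ys').getLast (by simp) ≠ y₀ := by
      intro h; rw [List.nodup_cons] at hnd
      exact hnd.1 (h ▸ hlastmem)
    refine ⟨c', hc', by rw [hgl]; exact hlast, ?_, ?_, ?_⟩
    · intro k hfk
      exact hfx k (hstep_free x k hxy₀ hfk)
    · intro k hfk
      rw [hgl]
      refine hflast k ?_
      rw [← hgl] at *
      exact hstep_free _ k hlastney₀ (by rw [hgl] at *; exact hfk)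
    · intro e he
      rw [hgl]
      refine hsome e ?_
      rcases he with he | rfl
      · rcases eq_or_ne e s(x,y₁) with rfl | hne'
        · right; rfl
        · rcases eq_or_ne e s(x,y₀) with rfl | hne
          · left; rw [hc₁def, Function.update_self]; rfl
          · left; rw [hc₁eq e hne hne']; exact he
      · left; rw [hc₁def, Function.update_self]; rfl



section Walk
variable {V' : Type*} [Fintype V'] [DecidableEq V'] {H : SimpleGraph V'} [DecidableRel H.Adj]

/-- in a graph of max degree ≤ 2, walking away from an edge is deterministic -/
lemma walk_unique_end {u v v' u₀ : V'} (hdeg : ∀ t, H.degree t ≤ 2)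
    (p : H.Walk u v) (q : H.Walk u v') (hp : p.IsPath) (hq : q.IsPath)
    (hadj : H.Adj u₀ u) (hup : u₀ ∉ p.support) (huq : u₀ ∉ q.support)
    (hdv : H.degree v ≤ 1) (hdv' : H.degree v' ≤ 1) : v = v' := by
  cases p with
  | nil =>
    cases q with
    | nil => rfl
    | @cons _ z _ hadj' q' =>
      exfalso
      have hz : z ∈ H.neighborFinset u := by rw [SimpleGraph.mem_neighborFinset]; exact hadj'
      have hu₀ : u₀ ∈ H.neighborFinset u := by
        rw [SimpleGraph.mem_neighborFinset]; exact hadj.symm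
      have hzu₀ : z ≠ u₀ := by
        intro h; subst h
        exact huq (by simp [SimpleGraph.Walk.support_cons])
      have hsub : ({z, u₀} : Finset V') ⊆ H.neighborFinset u := by
        intro t ht; rcases Finset.mem_insert.mp ht with rfl | ht
        · exact hz
        · rw [Finset.mem_singleton] at ht; subst ht; exact hu₀
      have hcard := Finset.card_le_card hsub
      rw [Finset.card_insert_of_notMem (by simpa using hzu₀), Finset.card_singleton] at hcard
      rw [← SimpleGraph.card_neighborFinset_eq_degree] at hdv
      omega
  | @cons _ z _ hadj' p' =>
    cases q with
    | nil =>
      exfalso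
      have hz : z ∈ H.neighborFinset u := by rw [SimpleGraph.mem_neighborFinset]; exact hadj'
      have hu₀ : u₀ ∈ H.neighborFinset u := by
        rw [SimpleGraph.mem_neighborFinset]; exact hadj.symm
      have hzu₀ : z ≠ u₀ := by
        intro h; subst h
        exact hup (by simp [SimpleGraph.Walk.support_cons, SimpleGraph.Walk.start_mem_support])
      have hsub : ({z, u₀} : Finset V') ⊆ H.neighborFinset u := by
        intro t ht; rcases Finset.mem_insert.mp ht with rfl | ht
        · exact hz
        · rw [Finset.mem_singleton] at ht; subst ht; exact hu₀
      have hcard := Finset.card_le_card hsub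
      rw [Finset.card_insert_of_notMem (by simpa using hzu₀), Finset.card_singleton] at hcard
      rw [← SimpleGraph.card_neighborFinset_eq_degree] at hdv'
      omega
    | @cons _ z' _ hadj'' q' =>
      have hzu₀ : z ≠ u₀ := by
        intro h; subst h
        exact hup (by simp [SimpleGraph.Walk.support_cons, SimpleGraph.Walk.start_mem_support])
      have hz'u₀ : z' ≠ u₀ := by
        intro h; subst h
        exact huq (by simp [SimpleGraph.Walk.support_cons, SimpleGraph.Walk.start_mem_support])
      have hzz' : z = z' := by
        by_contra hne
        have hsub : ({z, z', u₀} : Finset V') ⊆ H.neighborFinset u := by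
          intro t ht
          rw [SimpleGraph.mem_neighborFinset]
          rcases Finset.mem_insert.mp ht with rfl | ht
          · exact hadj'
          rcases Finset.mem_insert.mp ht with rfl | ht
          · exact hadj''
          · rw [Finset.mem_singleton] at ht; subst ht; exact hadj.symm
        have hcard := Finset.card_le_card hsub
        rw [Finset.card_insert_of_notMem (by simp [hne, hzu₀]),
          Finset.card_insert_of_notMem (by simpa using hz'u₀), Finset.card_singleton] at hcard
        have := hdeg u
        rw [← SimpleGraph.card_neighborFinset_eq_degree] at this
        omega
      subst hzz'
      rw [SimpleGraph.Walk.cons_isPath_iff] at hp hq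
      exact walk_unique_end hdeg p' q' hp.1 hq.1 hadj' hp.2 hq.2 hdv hdv'
  termination_by p.length

/-- a component of a graph with max degree ≤ 2 contains at most two distinct
"endpoints" (vertices of degree ≤ 1) -/
lemma three_endpoints {x w y : V'} (hdeg : ∀ t, H.degree t ≤ 2)
    (hx : H.degree x ≤ 1) (hw : H.degree w ≤ 1) (hy : H.degree y ≤ 1)
    (hxw : x ≠ w) (hxy : x ≠ y) (hwy : w ≠ y)
    (hrw : H.Reachable x w) (hry : H.Reachable x y) : False := by
  obtain ⟨p⟩ := hrw
  obtain ⟨q⟩ := hry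
  -- replace by paths
  have hp := p.toPath
  have hq := q.toPath
  clear p q
  obtain ⟨p, hppath⟩ := hp
  obtain ⟨q, hqpath⟩ := hq
  cases p with
  | nil => exact hxw rfl
  | @cons _ z _ hadj p' =>
    cases q with
    | nil => exact hxy rfl
    | @cons _ z' _ hadj' q' =>
      have hzz' : z = z' := by
        by_contra hne
        have hsub : ({z, z'} : Finset V') ⊆ H.neighborFinset x := by
          intro t ht
          rw [SimpleGraph.mem_neighborFinset]
          rcases Finset.mem_insert.mp ht with rfl | ht
          · exact hadj
          · rw [Finset.mem_singleton] at ht; subst ht; exact hadj'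
        have hcard := Finset.card_le_card hsub
        rw [Finset.card_insert_of_notMem (by simpa using hne), Finset.card_singleton] at hcard
        rw [← SimpleGraph.card_neighborFinset_eq_degree] at hx
        omega
      subst hzz'
      rw [SimpleGraph.Walk.cons_isPath_iff] at hppath hqpath
      exact hwy (walk_unique_end hdeg p' q' hppath.1 hqpath.1 hadj hppath.2 hqpath.2 hw hy)

end Walk

lemma swapC_eq_of_ne_ab {c : Sym2 V → Option ℕ} {a b : ℕ} {x₀ : V} {e : Sym2 V}
    (ha : c e ≠ some a) (hb : c e ≠ some b) : swapC c a b x₀ e = c e := by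
  rcases swapC_cases (c := c) (a := a) (b := b) (x₀ := x₀) e with h | h <;> rw [h]
  exact τ_eq_self ha hb

lemma swapC_none {c : Sym2 V → Option ℕ} {a b : ℕ} {x₀ : V} {e : Sym2 V}
    (h : c e = none) : swapC c a b x₀ e = none := by
  have := swapC_isSome (c := c) (a := a) (b := b) (x₀ := x₀) e
  rw [h] at this
  simpa using Option.not_isSome_iff_eq_none.mp (by rw [this]; simp)

/-- max degree 2 in the ab-graph -/
lemma abDeg_le_two {c : Sym2 V → Option ℕ} {a b : ℕ} (hc : Good G d c) (t : V) :
    (abGraph c a b).degree t ≤ 2 := by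
  classical
  rw [← SimpleGraph.card_neighborFinset_eq_degree]
  have hinj : Set.InjOn (fun z => c s(t,z)) ((abGraph c a b).neighborFinset t) := by
    intro z₁ h₁ z₂ h₂ heq
    rw [Finset.mem_coe, SimpleGraph.mem_neighborFinset] at h₁ h₂
    simp only [] at heq
    by_contra hne
    have hedges : s(t,z₁) ≠ s(t,z₂) := fun h => hne (Sym2.congr_right.mp h)
    have hsome : (c s(t,z₁)).isSome := by
      rcases h₁.2 with h | h <;> simp [h]
    exact hc.2.2 _ _ t hedges (by simp) (by simp) hsome heq
  have hmap : ∀ z ∈ (abGraph c a b).neighborFinset t,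
      (fun z => c s(t,z)) z ∈ ({some a, some b} : Finset (Option ℕ)) := by
    intro z hz
    rw [SimpleGraph.mem_neighborFinset] at hz
    rcases hz.2 with h | h <;> simp [h]
  have := Finset.card_le_card_of_injOn _ hmap hinj
  calc ((abGraph c a b).neighborFinset t).card ≤ ({some a, some b} : Finset (Option ℕ)).card :=
        this
    _ ≤ 2 := Finset.card_insert_le _ _ |>.trans (by simp)

lemma abDeg_le_one_of_free {c : Sym2 V → Option ℕ} {a b : ℕ} (hc : Good G d c) {t : V}
    (hf : Free c t a ∨ Free c t b) : (abGraph c a b).degree t ≤ 1 := by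
  classical
  rw [← SimpleGraph.card_neighborFinset_eq_degree]
  have hinj : Set.InjOn (fun z => c s(t,z)) ((abGraph c a b).neighborFinset t) := by
    intro z₁ h₁ z₂ h₂ heq
    rw [Finset.mem_coe, SimpleGraph.mem_neighborFinset] at h₁ h₂
    simp only [] at heq
    by_contra hne
    have hedges : s(t,z₁) ≠ s(t,z₂) := fun h => hne (Sym2.congr_right.mp h)
    have hsome : (c s(t,z₁)).isSome := by
      rcases h₁.2 with h | h <;> simp [h]
    exact hc.2.2 _ _ t hedges (by simp) (by simp) hsome heq
  rcases hf with hf | hf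
  · have hmap : ∀ z ∈ (abGraph c a b).neighborFinset t,
        (fun z => c s(t,z)) z ∈ ({some b} : Finset (Option ℕ)) := by
      intro z hz
      rw [SimpleGraph.mem_neighborFinset] at hz
      rcases hz.2 with h | h
      · exact absurd h (hf _ (by simp))
      · simp [h]
    have := Finset.card_le_card_of_injOn _ hmap hinj
    simpa using this
  · have hmap : ∀ z ∈ (abGraph c a b).neighborFinset t,
        (fun z => c s(t,z)) z ∈ ({some a} : Finset (Option ℕ)) := by
      intro z hz
      rw [SimpleGraph.mem_neighborFinset] at hz
      rcases hz.2 with h | h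
      · simp [h]
      · exact absurd h (hf _ (by simp))
    have := Finset.card_le_card_of_injOn _ hmap hinj
    simpa using this


open scoped Classical in
/-- Vizing extension lemma: one more edge can be colored -/
lemma extend (hd : ∀ v, G.degree v ≤ d) {c : Sym2 V → Option ℕ} (hc : Good G d c)
    {x y₀ : V} (hxy : G.Adj x y₀) (hnone : c s(x, y₀) = none) :
    ∃ c', Good G d c' ∧ (c' s(x, y₀)).isSome ∧ ∀ e, (c e).isSome → (c' e).isSome := by
  -- maximal fan
  set P : ℕ → Prop := fun m => ∃ l : List V, IsFan G c x (y₀ :: l) ∧ l.length = m with hP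
  have hP0 : P 0 := by
    refine ⟨[], ⟨by simp, by simpa using hxy.ne, ?_, by simp [List.isChain_singleton]⟩, rfl⟩
    intro y hy
    rw [List.mem_singleton] at hy
    subst hy; exact hxy
  have hPbound : ∀ m, P m → m + 1 ≤ Fintype.card V := by
    rintro m ⟨l, hl, rfl⟩
    have := List.Nodup.length_le_card hl.1
    simpa using this
  set M := Nat.findGreatest P (Fintype.card V) with hM
  have hPM : P M := Nat.findGreatest_spec (Nat.zero_le _) hP0
  have hnotP : ¬ P (M + 1) := by
    intro h
    have hle := hPbound _ h
    exact Nat.findGreatest_is_greatest (lt_add_one M) (by omega) h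
  obtain ⟨l, hfan, hlen⟩ := hPM
  have hne : (y₀ :: l) ≠ [] := by simp
  set yk := (y₀ :: l).getLast hne with hyk
  have hykmem : yk ∈ y₀ :: l := List.getLast_mem hne
  have hadjF : ∀ y ∈ y₀ :: l, G.Adj x y := hfan.2.2.1
  have hxF : x ∉ y₀ :: l := hfan.2.1
  have hadjyk : G.Adj x yk := hadjF yk hykmem
  obtain ⟨b, hbd, hfbyk⟩ := exists_free hc hd yk
  by_cases hbx : Free c x b
  · -- Case A : b free at x and at yk : rotate and color
    obtain ⟨c₁, hc₁, hlast, hfx, hflast, hsome⟩ := rotate x l y₀ c hc hfan hnone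
    refine ⟨Function.update c₁ s(x, yk) (some b),
      goodUpdate hc₁ hadjyk hbd (hfx b hbx) (hflast b hfbyk), ?_, ?_⟩
    · rcases hsome s(x,y₀) (Or.inr rfl) with h | h
      · rcases eq_or_ne s(x,y₀) s(x,yk) with he | he
        · rw [he, Function.update_self]; simp
        · rw [Function.update_of_ne he]; exact h
      · rw [h, Function.update_self]; simp
    · intro e he
      rcases hsome e (Or.inl he) with h | h
      · rcases eq_or_ne e s(x,yk) with he' | he'
        · rw [he', Function.update_self]; simp
        · rw [Function.update_of_ne he']; exact h
      · rw [h, Function.update_self]; simp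
  · -- Case B : b is used at x
    obtain ⟨f, hxf, hcf⟩ : ∃ f, x ∈ f ∧ c f = some b := by
      by_contra h
      push_neg at h
      exact hbx (fun e hxe => h e hxe)
    obtain ⟨z, rfl⟩ := Sym2.mem_iff_exists.mp hxf
    have hfz : G.Adj x z := by
      have := hc.1 s(x,z) (by rw [hcf]; simp)
      rwa [SimpleGraph.mem_edgeSet] at this
    have hzmem : z ∈ y₀ :: l := by
      by_contra hznot
      apply hnotP
      refine ⟨l ++ [z], ⟨?_, ?_, ?_, ?_⟩, by simp [hlen]⟩
      · have : (y₀ :: (l ++ [z])) = (y₀ :: l) ++ [z] := by simp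
        rw [this, List.nodup_append]
        exact ⟨hfan.1, by simp, by simpa [List.disjoint_singleton] using (show ¬y₀ = z ∧ ∀ a ∈ l, ¬a = z from ⟨fun h => hznot (by simp [← h]), fun a ha h => hznot (by simp [← h, ha])⟩)⟩
      · intro hx
        rcases List.mem_cons.mp hx with h | h
        · exact hxF (h ▸ List.mem_cons_self)
        · rcases List.mem_append.mp h with h | h
          · exact hxF (List.mem_cons_of_mem _ h)
          · rw [List.mem_singleton] at h; exact hfz.ne h
      · intro y hy
        rcases List.mem_cons.mp hy with rfl | h
        · exact hxy
        · rcases List.mem_append.mp h with h | h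
          · exact hadjF y (List.mem_cons_of_mem _ h)
          · rw [List.mem_singleton] at h; subst h; exact hfz
      · have heq : (y₀ :: (l ++ [z])) = (y₀ :: l) ++ [z] := by simp
        rw [heq, List.isChain_append]
        refine ⟨hfan.2.2.2, List.isChain_singleton z, ?_⟩
        intro p hp q hq
        rw [List.getLast?_eq_getLast hne] at hp
        rw [Option.mem_def, Option.some_inj] at hp
        simp only [List.head?_cons, Option.mem_def, Option.some_inj] at hq
        subst hp; subst hq
        exact ⟨b, hcf, hfbyk⟩
    have hzy₀ : z ≠ y₀ := by
      intro h; subst h; rw [hnone] at hcf; cases hcf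
    have hzl : z ∈ l := by
      rcases List.mem_cons.mp hzmem with h | h
      · exact absurd h hzy₀
      · exact h
    obtain ⟨l₁, l₂, rfl⟩ := List.append_of_mem hzl
    -- the full fan list splits
    have hsplit : (y₀ :: (l₁ ++ z :: l₂)) = (y₀ :: l₁) ++ (z :: l₂) := by simp
    have hfne : (y₀ :: l₁) ≠ [] := by simp
    set w := (y₀ :: l₁).getLast hfne with hw
    have hwmem : w ∈ y₀ :: l₁ := List.getLast_mem hfne
    have hwmemF : w ∈ y₀ :: (l₁ ++ z :: l₂) := by
      rw [hsplit]; exact List.mem_append_left _ hwmem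
    -- chain decomposition
    have hchain := hfan.2.2.2
    rw [hsplit, List.isChain_append] at hchain
    obtain ⟨hch1, hch2, hch3⟩ := hchain
    have hndF : ((y₀ :: l₁) ++ (z :: l₂)).Nodup := by rw [← hsplit]; exact hfan.1
    have hdisj := List.disjoint_of_nodup_append hndF
    have hbw : Free c w b := by
      have := hch3 w (by rw [List.getLast?_eq_getLast hfne]; rfl) z (by simp)
      obtain ⟨k, hk1, hk2⟩ := this
      rw [hcf] at hk1
      obtain rfl := Option.some_inj.mp hk1
      exact hk2
    -- the color a free at x
    obtain ⟨a, had, hfa⟩ := exists_free hc hd x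
    have hab : a ≠ b := by
      intro h; subst h
      exact hfa _ hxf hcf
    -- yk is the last of the second part
    have hykeq : yk = (z :: l₂).getLast (by simp) := by
      rw [hyk]
      have : (y₀ :: (l₁ ++ z :: l₂)).getLast hne =
          ((y₀ :: l₁) ++ (z :: l₂)).getLast (by simp [← hsplit]) := by
        congr 1
      rw [this]
      exact List.getLast_append_of_right_ne_nil _ _ (by simp)
    have hykmem2 : yk ∈ z :: l₂ := by rw [hykeq]; exact List.getLast_mem _
    -- degree facts in the ab graph
    have hdeg2 : ∀ t, (abGraph c a b).degree t ≤ 2 := abDeg_le_two hc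
    have hdegx : (abGraph c a b).degree x ≤ 1 := abDeg_le_one_of_free hc (Or.inl hfa)
    have hdegw : (abGraph c a b).degree w ≤ 1 := abDeg_le_one_of_free hc (Or.inr hbw)
    have hdegyk : (abGraph c a b).degree yk ≤ 1 := abDeg_le_one_of_free hc (Or.inr hfbyk)
    have hxw : x ≠ w := fun h => hxF (h ▸ hwmemF)
    have hxyk : x ≠ yk := fun h => hxF (h ▸ hykmem)
    -- colors on fan edges other than s(x,z) are neither a nor b
    have hknota : ∀ (q : V) k, c s(x,q) = some k → k ≠ a := by
      intro q k h hka
      subst hka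
      exact hfa _ (by simp) h
    have hknotb : ∀ (q : V) k, q ≠ z → c s(x,q) = some k → k ≠ b := by
      intro q k hqz h hkb
      subst hkb
      have hedge : s(x,q) ≠ s(x,z) := fun h' => hqz (Sym2.congr_right.mp h')
      exact hc.2.2 _ _ x hedge (by simp) (by simp) (by simp [h]) (by rw [h, hcf]) 
    by_cases hreach : (abGraph c a b).Reachable x w
    · -- Case B2 : swap on the component of yk, rotate the full fan
      have hwyk : w ≠ yk := by
        intro h
        exact hdisj hwmem (h ▸ hykmem2)
      have hnr : ¬ (abGraph c a b).Reachable x yk := by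
        intro h
        exact three_endpoints hdeg2 hdegx hdegw hdegyk hxw hxyk hwyk hreach h
      set c' := swapC c a b yk with hc'
      have hc'good : Good G d c' := goodSwap hc had hbd
      have hnrx : ¬ (abGraph c a b).Reachable yk x := fun h => hnr h.symm
      have hfa' : Free c' x a := free_swap_of_not_reach hnrx hfa
      have hfyk' : Free c' yk a := free_swap_reach (SimpleGraph.Reachable.refl yk) hfbyk
      -- fan edges colors are unchanged, except possibly s(x,z) which is also unchanged
      have hczne : ∀ v ∈ s(x,z), ¬ (abGraph c a b).Reachable yk v := by
        intro v hv
        rcases Sym2.mem_iff.mp hv with rfl | rfl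
        · exact hnrx
        · intro h
          have hadjxz : (abGraph c a b).Adj v x := by
            refine ⟨hfz.ne', ?_⟩
            rw [Sym2.eq_swap]
            right; exact hcf
          exact hnrx (h.trans hadjxz.reachable)
      have hcz' : c' s(x,z) = some b := by
        rw [hc', swapC_neg (by push_neg; exact fun v hv => hczne v hv)]
        exact hcf
      have hbw' : Free c' w b := by
        refine free_swap_of_not_reach ?_ hbw
        intro h
        exact hnr (hreach.trans h.symm)
      -- rebuild the full fan under c'
      have hfan' : IsFan G c' x (y₀ :: (l₁ ++ z :: l₂)) := by
        refine ⟨hfan.1, hxF, hadjF, ?_⟩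
        rw [hsplit, List.isChain_append]
        refine ⟨?_, ?_, ?_⟩
        · refine chain'_imp_mem _ _ hch1 ?_
          rintro p hp q hq ⟨k, hk1, hk2⟩
          have hqz : q ≠ z := fun h => hdisj (List.mem_cons_of_mem _ hq) (by simp [h])
          have hka := hknota q k hk1
          have hkb := hknotb q k hqz hk1
          refine ⟨k, ?_, free_swap_of_ne hka hkb hk2⟩
          rw [hc', swapC_eq_of_ne_ab (by simp [hk1, hka]) (by simp [hk1, hkb])]
          exact hk1
        · refine chain'_imp_mem _ _ hch2 ?_
          rintro p hp q hq ⟨k, hk1, hk2⟩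
          have hqz : q ≠ z := by
            have := List.Nodup.of_append_right hndF
            rw [List.nodup_cons] at this
            exact fun h => this.1 (h ▸ hq)
          have hka := hknota q k hk1
          have hkb := hknotb q k hqz hk1
          refine ⟨k, ?_, free_swap_of_ne hka hkb hk2⟩
          rw [hc', swapC_eq_of_ne_ab (by simp [hk1, hka]) (by simp [hk1, hkb])]
          exact hk1
        · intro p hp q hq
          rw [List.getLast?_eq_getLast hfne] at hp
          rw [Option.mem_def, Option.some_inj] at hp
          simp only [List.head?_cons, Option.mem_def, Option.some_inj] at hq
          subst hp; subst hq
          exact ⟨b, hcz', hbw'⟩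
      have hc'none : c' s(x,y₀) = none := swapC_none hnone
      obtain ⟨c₁, hc₁, hlast, hfx, hflast, hsome⟩ := rotate x _ y₀ c' hc'good hfan' hc'none
      refine ⟨Function.update c₁ s(x, yk) (some a),
        goodUpdate hc₁ hadjyk had (hfx a hfa') (hflast a hfyk'), ?_, ?_⟩
      · rcases hsome s(x,y₀) (Or.inr rfl) with h | h
        · rcases eq_or_ne s(x,y₀) s(x,yk) with he | he
          · rw [he, Function.update_self]; simp
          · rw [Function.update_of_ne he]; exact h
        · rw [h, Function.update_self]; simp
      · intro e he
        have he' : (c' e).isSome := by rw [hc', swapC_isSome]; exact he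
        rcases hsome e (Or.inl he') with h | h
        · rcases eq_or_ne e s(x,yk) with he'' | he''
          · rw [he'', Function.update_self]; simp
          · rw [Function.update_of_ne he'']; exact h
        · rw [h, Function.update_self]; simp
    · -- Case B1 : swap on the component of w, rotate the prefix fan
      set c' := swapC c a b w with hc'
      have hc'good : Good G d c' := goodSwap hc had hbd
      have hnrx : ¬ (abGraph c a b).Reachable w x := fun h => hreach h.symm
      have hfa' : Free c' x a := free_swap_of_not_reach hnrx hfa
      have hfw' : Free c' w a := free_swap_reach (SimpleGraph.Reachable.refl w) hbw
      have hadjw : G.Adj x w := hadjF w hwmemF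
      have hfan' : IsFan G c' x (y₀ :: l₁) := by
        refine ⟨List.Nodup.of_append_left hndF, ?_, ?_, ?_⟩
        · intro h; exact hxF (by rw [hsplit]; exact List.mem_append_left _ h)
        · intro y hy; exact hadjF y (by rw [hsplit]; exact List.mem_append_left _ hy)
        · refine chain'_imp_mem _ _ hch1 ?_
          rintro p hp q hq ⟨k, hk1, hk2⟩
          have hqz : q ≠ z := fun h => hdisj (List.mem_cons_of_mem _ hq) (by simp [h])
          have hka := hknota q k hk1
          have hkb := hknotb q k hqz hk1
          refine ⟨k, ?_, free_swap_of_ne hka hkb hk2⟩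
          rw [hc', swapC_eq_of_ne_ab (by simp [hk1, hka]) (by simp [hk1, hkb])]
          exact hk1
      have hc'none : c' s(x,y₀) = none := swapC_none hnone
      obtain ⟨c₁, hc₁, hlast, hfx, hflast, hsome⟩ := rotate x l₁ y₀ c' hc'good hfan' hc'none
      refine ⟨Function.update c₁ s(x, w) (some a),
        goodUpdate hc₁ hadjw had (hfx a hfa') (hflast a hfw'), ?_, ?_⟩
      · rcases hsome s(x,y₀) (Or.inr rfl) with h | h
        · rcases eq_or_ne s(x,y₀) s(x,w) with he | he
          · rw [he, Function.update_self]; simp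
          · rw [Function.update_of_ne he]; exact h
        · rw [h, Function.update_self]; simp
      · intro e he
        have he' : (c' e).isSome := by rw [hc', swapC_isSome]; exact he
        rcases hsome e (Or.inl he') with h | h
        · rcases eq_or_ne e s(x,w) with he'' | he''
          · rw [he'', Function.update_self]; simp
          · rw [Function.update_of_ne he'']; exact h
        · rw [h, Function.update_self]; simp

lemma all_colored (hd : ∀ v, G.degree v ≤ d) :
    ∃ c, Good G d c ∧ ∀ e ∈ G.edgeSet, (c e).isSome := by
  classical
  suffices h : ∀ n (c : Sym2 V → Option ℕ), Good G d c →
      (G.edgeFinset.filter (fun e => c e = none)).card ≤ n →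
      ∃ c', Good G d c' ∧ ∀ e ∈ G.edgeSet, (c' e).isSome by
    obtain ⟨c', hg, hall⟩ := h G.edgeFinset.card (fun _ => none)
      ⟨by simp, by simp, by simp⟩ (Finset.card_filter_le _ _)
    exact ⟨c', hg, hall⟩
  intro n
  induction n with
  | zero =>
    intro c hc hcard
    refine ⟨c, hc, ?_⟩
    intro e he
    by_contra h
    have hmem : e ∈ G.edgeFinset.filter (fun e => c e = none) := by
      rw [Finset.mem_filter, SimpleGraph.mem_edgeFinset]
      exact ⟨he, Option.not_isSome_iff_eq_none.mp h⟩
    have := Finset.card_pos.mpr ⟨e, hmem⟩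
    omega
  | succ n ih =>
    intro c hc hcard
    rcases Finset.eq_empty_or_nonempty (G.edgeFinset.filter (fun e => c e = none)) with
      hempty | ⟨e₀, he₀⟩
    · refine ⟨c, hc, ?_⟩
      intro e he
      by_contra h
      have hmem : e ∈ G.edgeFinset.filter (fun e => c e = none) := by
        rw [Finset.mem_filter, SimpleGraph.mem_edgeFinset]
        exact ⟨he, Option.not_isSome_iff_eq_none.mp h⟩
      rw [hempty] at hmem
      exact absurd hmem (Finset.notMem_empty e)
    · rw [Finset.mem_filter] at he₀
      obtain ⟨he₀e, he₀n⟩ := he₀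
      induction e₀ with
      | _ x y₀ =>
        have hadj : G.Adj x y₀ := by
          rw [SimpleGraph.mem_edgeFinset, SimpleGraph.mem_edgeSet] at he₀e
          exact he₀e
        obtain ⟨c₁, hc₁, hc₁some, hmono⟩ := extend hd hc hadj he₀n
        refine ih c₁ hc₁ ?_
        have hsub : G.edgeFinset.filter (fun e => c₁ e = none) ⊆
            (G.edgeFinset.filter (fun e => c e = none)).erase s(x,y₀) := by
          intro e he
          rw [Finset.mem_filter] at he
          rw [Finset.mem_erase, Finset.mem_filter]
          refine ⟨?_, he.1, ?_⟩
          · intro h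
            subst h
            rw [he.2] at hc₁some
            simp at hc₁some
          · by_contra h
            have := hmono e (Option.isSome_iff_ne_none.mpr h)
            rw [he.2] at this
            simp at this
        have h1 := Finset.card_le_card hsub
        have h2 : s(x,y₀) ∈ G.edgeFinset.filter (fun e => c e = none) := by
          rw [Finset.mem_filter]; exact ⟨he₀e, he₀n⟩
        have h3 := Finset.card_erase_of_mem h2
        have h4 := Finset.card_pos.mpr ⟨_, h2⟩
        omega

/-- Vizing's theorem, formulated with colors `Fin (d+1)` -/
theorem vizing (hd : ∀ v, G.degree v ≤ d) :
    ∃ C : Sym2 V → Fin (d + 1), ∀ e ∈ G.edgeSet, ∀ f ∈ G.edgeSet, e ≠ f →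
      ∀ v, v ∈ e → v ∈ f → C e ≠ C f := by
  obtain ⟨c, hc, hall⟩ := all_colored hd
  refine ⟨fun e => ⟨min ((c e).getD 0) d, by omega⟩, ?_⟩
  intro e he f hf hef v hve hvf hCeq
  have h1 : (c e).isSome := hall e he
  have h2 : (c f).isSome := hall f hf
  obtain ⟨k, hk⟩ := Option.isSome_iff_exists.mp h1
  obtain ⟨j, hj⟩ := Option.isSome_iff_exists.mp h2
  have hkd := hc.2.1 e k hk
  have hjd := hc.2.1 f j hj
  have hne : c e ≠ c f := hc.2.2 e f v hef hve hvf h1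
  rw [Fin.mk.injEq, hk, hj] at hCeq
  simp only [Option.getD_some] at hCeq
  rw [min_eq_left hkd, min_eq_left hjd] at hCeq
  exact hne (by rw [hk, hj, hCeq])

/-- greedy coloring of a conflict relation with bounded degree -/
lemma greedy {α : Type*} [Fintype α] [DecidableEq α] (R : α → α → Prop) [DecidableRel R]
    (hsymm : ∀ a b, R a b → R b a) (hirr : ∀ a, ¬ R a a) (m : ℕ)
    (hdeg : ∀ a, (Finset.univ.filter (fun b => R a b)).card ≤ m) :
    ∃ C : α → Fin (m+1), ∀ a b, R a b → C a ≠ C b := by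
  classical
  suffices h : ∀ S : Finset α, ∃ C : α → Fin (m+1), ∀ a ∈ S, ∀ b ∈ S, R a b → C a ≠ C b by
    obtain ⟨C, hC⟩ := h Finset.univ
    exact ⟨C, fun a b hab => hC a (Finset.mem_univ a) b (Finset.mem_univ b) hab⟩
  intro S
  induction S using Finset.induction_on with
  | empty => exact ⟨fun _ => 0, by simp⟩
  | @insert a S ha ih =>
    obtain ⟨C, hC⟩ := ih
    set T : Finset (Fin (m+1)) := (S.filter (fun b => R a b)).image C with hT
    have hTcard : T.card ≤ m := by
      calc T.card ≤ (S.filter (fun b => R a b)).card := Finset.card_image_le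
        _ ≤ (Finset.univ.filter (fun b => R a b)).card :=
            Finset.card_le_card (Finset.filter_subset_filter _ (Finset.subset_univ S))
        _ ≤ m := hdeg a
    obtain ⟨col, hcol⟩ : ∃ col : Fin (m+1), col ∉ T := by
      by_contra h
      push_neg at h
      have : (Finset.univ : Finset (Fin (m+1))) ⊆ T := fun t _ => h t
      have := Finset.card_le_card this
      rw [Finset.card_univ, Fintype.card_fin] at this
      omega
    refine ⟨Function.update C a col, ?_⟩
    intro p hp q hq hpq
    by_cases hpa : p = a
    · by_cases hqa : q = a
      · rw [hpa, hqa] at hpq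
        exact absurd hpq (hirr a)
      · have hqS : q ∈ S := by
          rcases Finset.mem_insert.mp hq with h | h
          · exact absurd h hqa
          · exact h
        rw [hpa, Function.update_self, Function.update_of_ne hqa]
        intro h
        apply hcol
        rw [h]
        refine Finset.mem_image.mpr ⟨q, Finset.mem_filter.mpr ⟨hqS, ?_⟩, rfl⟩
        rw [← hpa]; exact hpq
    · by_cases hqa : q = a
      · have hpS : p ∈ S := by
          rcases Finset.mem_insert.mp hp with h | h
          · exact absurd h hpa
          · exact h
        rw [hqa, Function.update_self, Function.update_of_ne hpa]
        intro h
        apply hcol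
        rw [← h]
        refine Finset.mem_image.mpr ⟨p, Finset.mem_filter.mpr ⟨hpS, ?_⟩, rfl⟩
        refine hsymm p a ?_
        rw [← hqa]; exact hpq
      · have hqS : q ∈ S := by
          rcases Finset.mem_insert.mp hq with h | h
          · exact absurd h hqa
          · exact h
        have hpS : p ∈ S := by
          rcases Finset.mem_insert.mp hp with h | h
          · exact absurd h hpa
          · exact h
        rw [Function.update_of_ne hqa, Function.update_of_ne hpa]
        exact hC p hpS q hqS hpq

open scoped Classical in
/-- at one endpoint, the number of conflicting edges is at most L -/
lemma conflict_card_le (L : ℕ)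
    (σ : (v : V) → G.incidenceSet v → ZMod (G.degree v))
    (hσ : ∀ v, Function.Injective (σ v)) (v : V) (e : Sym2 V) (he : e ∈ G.incidenceSet v) :
    (Finset.univ.filter (fun f => ∃ (hf : f ∈ G.incidenceSet v), f ≠ e ∧
      min ((σ v ⟨e, he⟩ - σ v ⟨f, hf⟩).val) ((σ v ⟨f, hf⟩ - σ v ⟨e, he⟩).val) ≤ L / 2)).card
      ≤ L := by
  haveI : NeZero (G.degree v) := by
    constructor
    obtain ⟨w, rfl⟩ := Sym2.mem_iff_exists.mp he.2
    have hadj : G.Adj v w := (SimpleGraph.mem_edgeSet G).mp he.1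
    have : 0 < G.degree v := by
      rw [SimpleGraph.degree_pos_iff_exists_adj]; exact ⟨w, hadj⟩
    omega
  set φ : Sym2 V → ZMod (G.degree v) := fun f =>
    if hf : f ∈ G.incidenceSet v then σ v ⟨f, hf⟩ - σ v ⟨e, he⟩ else 0 with hφ
  set D : Finset (ZMod (G.degree v)) :=
    Finset.univ.filter (fun t => t ≠ 0 ∧ min ((-t).val) (t.val) ≤ L / 2) with hD
  have hmap : ∀ f ∈ (Finset.univ.filter (fun f => ∃ (hf : f ∈ G.incidenceSet v), f ≠ e ∧
      min ((σ v ⟨e, he⟩ - σ v ⟨f, hf⟩).val) ((σ v ⟨f, hf⟩ - σ v ⟨e, he⟩).val) ≤ L / 2)),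
      φ f ∈ D := by
    intro f hf
    rw [Finset.mem_filter] at hf
    obtain ⟨-, hfi, hfe, hmin⟩ := hf
    rw [hD, Finset.mem_filter]
    refine ⟨Finset.mem_univ _, ?_, ?_⟩
    · rw [hφ]
      simp only [dif_pos hfi]
      refine sub_ne_zero_of_ne ?_
      intro h
      exact hfe (congrArg Subtype.val (hσ v h))
    · rw [hφ]
      simp only [dif_pos hfi, neg_sub]
      exact hmin
  have hinj : Set.InjOn φ (Finset.univ.filter (fun f => ∃ (hf : f ∈ G.incidenceSet v), f ≠ e ∧
      min ((σ v ⟨e, he⟩ - σ v ⟨f, hf⟩).val) ((σ v ⟨f, hf⟩ - σ v ⟨e, he⟩).val) ≤ L / 2)) := by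
    intro f₁ h₁ f₂ h₂ heq
    rw [Finset.mem_coe, Finset.mem_filter] at h₁ h₂
    obtain ⟨-, hf₁, -, -⟩ := h₁
    obtain ⟨-, hf₂, -, -⟩ := h₂
    rw [hφ] at heq
    simp only [dif_pos hf₁, dif_pos hf₂] at heq
    have := sub_left_injective heq
    exact congrArg Subtype.val (hσ v this)
  have hcard1 := Finset.card_le_card_of_injOn φ hmap hinj
  -- now bound the card of D
  set A : Finset (ZMod (G.degree v)) :=
    Finset.univ.filter (fun t => 1 ≤ t.val ∧ t.val ≤ L / 2) with hA
  set B : Finset (ZMod (G.degree v)) :=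
    Finset.univ.filter (fun t => 1 ≤ (-t).val ∧ (-t).val ≤ L / 2) with hB
  have hDsub : D ⊆ A ∪ B := by
    intro t ht
    rw [hD, Finset.mem_filter] at ht
    obtain ⟨-, ht0, htmin⟩ := ht
    rcases min_le_iff.mp htmin with h | h
    · refine Finset.mem_union_right _ ?_
      rw [hB, Finset.mem_filter]
      have : (-t) ≠ 0 := neg_ne_zero.mpr ht0
      have hv0 : (-t).val ≠ 0 := fun hh => this ((ZMod.val_eq_zero _).mp hh)
      exact ⟨Finset.mem_univ _, by omega, h⟩
    · refine Finset.mem_union_left _ ?_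
      rw [hA, Finset.mem_filter]
      have hv0 : t.val ≠ 0 := fun hh => ht0 ((ZMod.val_eq_zero _).mp hh)
      exact ⟨Finset.mem_univ _, by omega, h⟩
  have hAcard : A.card ≤ L / 2 := by
    have hmapA : ∀ t ∈ A, t.val ∈ Finset.Icc 1 (L / 2) := by
      intro t ht
      rw [hA, Finset.mem_filter] at ht
      rw [Finset.mem_Icc]
      exact ⟨ht.2.1, ht.2.2⟩
    have hinjA : Set.InjOn (fun t : ZMod (G.degree v) => t.val) A :=
      fun t₁ _ t₂ _ h => ZMod.val_injective _ h
    have := Finset.card_le_card_of_injOn _ hmapA hinjA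
    rw [Nat.card_Icc] at this
    omega
  have hBcard : B.card ≤ L / 2 := by
    have hmapB : ∀ t ∈ B, (-t).val ∈ Finset.Icc 1 (L / 2) := by
      intro t ht
      rw [hB, Finset.mem_filter] at ht
      rw [Finset.mem_Icc]
      exact ⟨ht.2.1, ht.2.2⟩
    have hinjB : Set.InjOn (fun t : ZMod (G.degree v) => (-t).val) B := by
      intro t₁ _ t₂ _ h
      have := ZMod.val_injective _ h
      exact neg_injective this
    have := Finset.card_le_card_of_injOn _ hmapB hinjB
    rw [Nat.card_Icc] at this
    omega
  have := Finset.card_le_card hDsub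
  have := Finset.card_union_le A B
  omega

end VizingProof


/-- Existence of an `L`-localized edge coloring: given a simple graph `G`
of maximum degree at most `d` together with a rotation system (a cyclic
order, encoded by an injection of the incidence set of each vertex `v`
into `ZMod (deg v)`), and an even `L ≥ 2`, there is an edge coloring with
at most `min d (2L) + 1` colors such that any two distinct edges incident
to a common vertex whose cyclic distance around that vertex is at most
`L / 2` receive different colors. -/
theorem exists_localized_edge_coloring
    {V : Type*} [Fintype V] (G : SimpleGraph V) [DecidableRel G.Adj]
    (d L : ℕ) (hd : G.maxDegree ≤ d) (hL : 2 ≤ L) (hLeven : Even L)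
    (σ : (v : V) → G.incidenceSet v → ZMod (G.degree v))
    (hσ : ∀ v, Function.Injective (σ v)) :
    ∃ C : Sym2 V → Fin (min d (2 * L) + 1),
      ∀ (v : V) (e f : G.incidenceSet v), e ≠ f →
        min (σ v e - σ v f).val (σ v f - σ v e).val ≤ L / 2 →
        C (e : Sym2 V) ≠ C (f : Sym2 V) := by
  classical
  by_cases hcase : d ≤ 2 * L
  · -- use Vizing's theorem
    rw [min_eq_left hcase]
    obtain ⟨C, hC⟩ := VizingProof.vizing (G := G) (d := d)
      (fun v => le_trans (G.degree_le_maxDegree v) hd)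
    refine ⟨C, ?_⟩
    intro v e f hef _
    exact hC ↑e e.2.1 ↑f f.2.1 (fun h => hef (Subtype.ext h)) v e.2.2 f.2.2
  · -- greedy coloring
    rw [min_eq_right (by omega)]
    set R : Sym2 V → Sym2 V → Prop := fun e f =>
      e ≠ f ∧ ∃ (v : V) (he : e ∈ G.incidenceSet v) (hf : f ∈ G.incidenceSet v),
        min ((σ v ⟨e, he⟩ - σ v ⟨f, hf⟩).val) ((σ v ⟨f, hf⟩ - σ v ⟨e, he⟩).val) ≤ L / 2 with hR
    haveI : DecidableRel R := fun a b => Classical.propDecidable (R a b)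
    have hsymm : ∀ a b, R a b → R b a := by
      rintro a b ⟨hne, v, ha, hb, hmin⟩
      exact ⟨hne.symm, v, hb, ha, by rw [min_comm]; exact hmin⟩
    have hirr : ∀ a, ¬ R a a := fun a h => h.1 rfl
    have hdeg : ∀ e, (Finset.univ.filter (fun f => R e f)).card ≤ 2 * L := by
      intro e
      by_cases heE : e ∈ G.edgeSet
      · have hrep : ∃ u₁ u₂, e = s(u₁, u₂) := by
          induction e using Sym2.ind with
          | _ x y => exact ⟨x, y, rfl⟩
        obtain ⟨u₁, u₂, rfl⟩ := hrep
        have he₁ : s(u₁, u₂) ∈ G.incidenceSet u₁ := ⟨heE, by simp⟩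
        have he₂ : s(u₁, u₂) ∈ G.incidenceSet u₂ := ⟨heE, by simp⟩
        set F₁ := Finset.univ.filter (fun f => ∃ (hf : f ∈ G.incidenceSet u₁), f ≠ s(u₁,u₂) ∧
          min ((σ u₁ ⟨s(u₁,u₂), he₁⟩ - σ u₁ ⟨f, hf⟩).val)
            ((σ u₁ ⟨f, hf⟩ - σ u₁ ⟨s(u₁,u₂), he₁⟩).val) ≤ L / 2) with hF₁
        set F₂ := Finset.univ.filter (fun f => ∃ (hf : f ∈ G.incidenceSet u₂), f ≠ s(u₁,u₂) ∧
          min ((σ u₂ ⟨s(u₁,u₂), he₂⟩ - σ u₂ ⟨f, hf⟩).val)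
            ((σ u₂ ⟨f, hf⟩ - σ u₂ ⟨s(u₁,u₂), he₂⟩).val) ≤ L / 2) with hF₂
        have hsub : Finset.univ.filter (fun f => R s(u₁,u₂) f) ⊆ F₁ ∪ F₂ := by
          intro f hf
          rw [Finset.mem_filter] at hf
          obtain ⟨-, hne, v, hev, hfv, hmin⟩ := hf
          rcases Sym2.mem_iff.mp hev.2 with rfl | rfl
          · refine Finset.mem_union_left _ ?_
            rw [hF₁, Finset.mem_filter]
            exact ⟨Finset.mem_univ _, hfv, hne.symm, hmin⟩
          · refine Finset.mem_union_right _ ?_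
            rw [hF₂, Finset.mem_filter]
            exact ⟨Finset.mem_univ _, hfv, hne.symm, hmin⟩
        have h1 := VizingProof.conflict_card_le (G := G) L σ hσ u₁ s(u₁,u₂) he₁
        have h2 := VizingProof.conflict_card_le (G := G) L σ hσ u₂ s(u₁,u₂) he₂
        rw [← hF₁] at h1
        rw [← hF₂] at h2
        have h3 := Finset.card_le_card hsub
        have h4 := Finset.card_union_le F₁ F₂
        omega
      · have hempty : Finset.univ.filter (fun f => R e f) = ∅ := by
          rw [Finset.filter_eq_empty_iff]
          rintro f - ⟨-, v, hev, -, -⟩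
          exact heE hev.1
        rw [hempty]
        simp
    obtain ⟨C, hC⟩ := VizingProof.greedy R hsymm hirr (2 * L) hdeg
    refine ⟨C, ?_⟩
    intro v e f hef hdist
    exact hC ↑e ↑f ⟨fun h => hef (Subtype.ext h), v, e.2, f.2, hdist⟩
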